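/- Let n ≥ 1, let A be an n×n complex matrix, and let g ∈ ℂⁿ. For all sufficiently small t > 0 the matrix I − (t/2)A is invertible, and the one-step error of the Crank–Nicolson scheme δ₂(t,g) = ‖exp(tA)g − (I + (t/2)A)·(I − (t/2)A)⁻¹ g‖ satisfies δ₂(t,g) = (t³/12)·‖A³g‖ + O(t⁴); that is, there exist constants C > 0 and t₀ > 0 such that for all t with 0 < t ≤ t₀, I − (t/2)A is invertible and |δ₂(t,g) − (t³/12)·‖A³g‖| ≤ C·t⁴. -/

import Mathlib

open NormedSpace

/-- Crank–Nicolson estimate in an abstract complex Banach algebra. -/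
theorem cn_aux {𝔸 : Type*} [NormedRing 𝔸] [NormedAlgebra ℂ 𝔸] [CompleteSpace 𝔸] (B : 𝔸) :
    ∃ C > (0 : ℝ), ∃ t₀ > (0 : ℝ), ∀ t : ℝ, 0 < t → t ≤ t₀ →
      IsUnit (1 - ((t : ℂ) / 2) • B) ∧
      ‖exp ((t : ℂ) • B) - (1 + ((t : ℂ) / 2) • B) * Ring.inverse (1 - ((t : ℂ) / 2) • B)
          + (((t : ℂ) ^ 3) / 12) • (B * B * B)‖ ≤ C * t ^ 4 := by
  set a : ℝ := ‖B‖ with ha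
  have ha0 : 0 ≤ a := norm_nonneg B
  set Efac : ℝ := ∑' i : ℕ, ((i.factorial : ℕ) : ℝ)⁻¹ with hE
  have hEfac_sum : Summable fun i : ℕ => ((i.factorial : ℕ) : ℝ)⁻¹ := by
    simpa using NormedSpace.expSeries_summable' (𝕂 := ℝ) (1 : ℝ)
  have hEfac0 : 0 ≤ Efac := tsum_nonneg fun i => by positivity
  set b : ℝ := ‖(1 : 𝔸)‖ with hb
  have hb0 : 0 ≤ b := norm_nonneg _
  refine ⟨a ^ 4 * Efac + 4 * a ^ 4 * b + 1, by positivity, min 1 (a + 1)⁻¹, by positivity, ?_⟩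
  intro t ht htle
  have ht1 : t ≤ 1 := le_trans htle (min_le_left _ _)
  have hta : t * a ≤ 1 := by
    have h1 : t ≤ (a + 1)⁻¹ := le_trans htle (min_le_right _ _)
    have h2 : t * a ≤ (a + 1)⁻¹ * a := by nlinarith
    have h3 : (a + 1)⁻¹ * a ≤ 1 := by
      rw [inv_mul_le_iff₀ (by linarith)]; linarith
    linarith
  set s : ℂ := (t : ℂ) / 2 with hs
  have hsnorm : ‖s‖ = t / 2 := by
    rw [hs]
    rw [norm_div]
    simp [Complex.norm_real, abs_of_pos ht]
  set c : 𝔸 := s • B with hc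
  have hcn : ‖c‖ ≤ t * a / 2 := by
    rw [hc, norm_smul, hsnorm]; ring_nf; rfl
  have hchalf : ‖c‖ ≤ 1 / 2 := le_trans hcn (by linarith)
  have hclt : ‖c‖ < 1 := lt_of_le_of_lt hchalf (by norm_num)
  have hu : IsUnit (1 - c) := ⟨Units.oneSub c hclt, rfl⟩
  refine ⟨hu, ?_⟩
  set v : 𝔸 := Ring.inverse (1 - c) with hv
  have hv1 : (1 - c) * v = 1 := Ring.mul_inverse_cancel _ hu
  have hveq : v = 1 + c * v := by
    have h6 : v - c * v = 1 := by
      have : (1 - c) * v = v - c * v := by noncomm_ring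
      rw [this] at hv1; exact hv1
    exact eq_add_of_sub_eq h6
  have hvnorm : ‖v‖ ≤ 2 * b := by
    have h7 : ‖v‖ ≤ b + ‖c‖ * ‖v‖ := by
      calc ‖v‖ = ‖1 + c * v‖ := by rw [← hveq]
        _ ≤ ‖(1 : 𝔸)‖ + ‖c * v‖ := norm_add_le _ _
        _ ≤ b + ‖c‖ * ‖v‖ := by gcongr; exact norm_mul_le _ _
    have h8 : ‖c‖ * ‖v‖ ≤ (1 / 2) * ‖v‖ :=
      mul_le_mul_of_nonneg_right hchalf (norm_nonneg v)
    linarith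
  have key : (1 + c + c ^ 2 + c ^ 3) * (1 - c) = 1 - c ^ 4 := by noncomm_ring
  have hv4 : v = 1 + c + c ^ 2 + c ^ 3 + c ^ 4 * v := by
    have h5 : (1 - c ^ 4) * v = 1 + c + c ^ 2 + c ^ 3 := by
      rw [← key, mul_assoc, hv1, mul_one]
    have h6 : v - c ^ 4 * v = 1 + c + c ^ 2 + c ^ 3 := by
      rw [← h5]; noncomm_ring
    exact eq_add_of_sub_eq h6
  have hcv : c * v = v - 1 := eq_sub_of_add_eq' hveq.symm
  set w : 𝔸 := c ^ 4 * v with hw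
  have hCN : (1 + c) * v = 1 + 2 * c + 2 * c ^ 2 + 2 * c ^ 3 + 2 * w := by
    have h9 : (1 + c) * v = v + (v - 1) := by rw [← hcv]; noncomm_ring
    rw [h9, hv4]; noncomm_ring
  have hwnorm : ‖w‖ ≤ t ^ 4 * a ^ 4 * (2 * b) / 16 := by
    have h10 : ‖c ^ 4‖ ≤ (t * a / 2) ^ 4 := by
      calc ‖c ^ 4‖ ≤ ‖c‖ ^ 4 := norm_pow_le' c (by norm_num)
        _ ≤ (t * a / 2) ^ 4 := by gcongr
    calc ‖w‖ ≤ ‖c ^ 4‖ * ‖v‖ := norm_mul_le _ _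
      _ ≤ (t * a / 2) ^ 4 * (2 * b) := by
          apply mul_le_mul h10 hvnorm (norm_nonneg v) (by positivity)
      _ = t ^ 4 * a ^ 4 * (2 * b) / 16 := by ring
  set x : 𝔸 := (t : ℂ) • B with hx
  have hxsum : Summable fun k : ℕ => ((k.factorial : ℂ))⁻¹ • x ^ k := by
    simpa using NormedSpace.expSeries_summable' (𝕂 := ℂ) x
  set T : 𝔸 := ∑' i : ℕ, (((i + 4).factorial : ℂ))⁻¹ • x ^ (i + 4) with hT
  have hexp4 : exp x = 1 + x + (2⁻¹ : ℂ) • x ^ 2 + (6⁻¹ : ℂ) • x ^ 3 + T := by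
    have h11 := Summable.sum_add_tsum_nat_add 4 hxsum
    simp only [exp_eq_tsum ℂ]
    rw [← h11, ← hT]
    congr 1
    simp [Finset.sum_range_succ, Nat.factorial, pow_succ]
  have hxnorm : ‖x‖ = t * a := by
    rw [hx, norm_smul, Complex.norm_real, Real.norm_eq_abs, abs_of_pos ht]
  have hterm : ∀ i : ℕ, ‖(((i + 4).factorial : ℂ))⁻¹ • x ^ (i + 4)‖ ≤
      ((i.factorial : ℕ) : ℝ)⁻¹ * (t ^ 4 * a ^ 4) := by
    intro i
    have hta0 : (0 : ℝ) ≤ t * a := by positivity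
    have hp : ‖x ^ (i + 4)‖ ≤ (t * a) ^ (i + 4) := by
      calc ‖x ^ (i + 4)‖ ≤ ‖x‖ ^ (i + 4) := norm_pow_le' x (by omega)
        _ = (t * a) ^ (i + 4) := by rw [hxnorm]
    have hp2 : (t * a) ^ (i + 4) ≤ t ^ 4 * a ^ 4 := by
      have h12 : (t * a) ^ (i + 4) = (t * a) ^ i * (t * a) ^ 4 := by ring
      have h13 : (t * a) ^ i ≤ 1 := pow_le_one₀ hta0 hta
      have h14 : (t * a) ^ 4 = t ^ 4 * a ^ 4 := by ring
      have h15 : (0 : ℝ) ≤ (t * a) ^ 4 := by positivity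
      nlinarith
    have hf : ‖(((i + 4).factorial : ℂ))⁻¹‖ = (((i + 4).factorial : ℕ) : ℝ)⁻¹ := by
      rw [norm_inv, Complex.norm_natCast]
    have hfle : (((i + 4).factorial : ℕ) : ℝ)⁻¹ ≤ ((i.factorial : ℕ) : ℝ)⁻¹ := by
      apply inv_anti₀
      · exact_mod_cast Nat.factorial_pos _
      · exact_mod_cast Nat.factorial_le (by omega)
    calc ‖(((i + 4).factorial : ℂ))⁻¹ • x ^ (i + 4)‖
        = (((i + 4).factorial : ℕ) : ℝ)⁻¹ * ‖x ^ (i + 4)‖ := by rw [norm_smul, hf]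
      _ ≤ ((i.factorial : ℕ) : ℝ)⁻¹ * (t ^ 4 * a ^ 4) := by
          apply mul_le_mul hfle (hp.trans hp2) (norm_nonneg _) (by positivity)
  have hgsum : Summable fun i : ℕ => ((i.factorial : ℕ) : ℝ)⁻¹ * (t ^ 4 * a ^ 4) :=
    hEfac_sum.mul_right _
  have hnsum : Summable fun i : ℕ => ‖(((i + 4).factorial : ℂ))⁻¹ • x ^ (i + 4)‖ :=
    Summable.of_nonneg_of_le (fun i => norm_nonneg _) hterm hgsum
  have hTnorm : ‖T‖ ≤ Efac * (t ^ 4 * a ^ 4) := by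
    calc ‖T‖ ≤ ∑' i : ℕ, ‖(((i + 4).factorial : ℂ))⁻¹ • x ^ (i + 4)‖ :=
          norm_tsum_le_tsum_norm hnsum
      _ ≤ ∑' i : ℕ, ((i.factorial : ℕ) : ℝ)⁻¹ * (t ^ 4 * a ^ 4) :=
          Summable.tsum_le_tsum hterm hnsum hgsum
      _ = Efac * (t ^ 4 * a ^ 4) := by rw [hE, tsum_mul_right]
  have hB3 : B * B * B = B ^ 3 := by rw [pow_succ, pow_two]
  have hmain : exp x - (1 + c) * v + ((t : ℂ) ^ 3 / 12) • (B * B * B) = T - (w + w) := by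
    rw [hexp4, hCN, hx, hc, hs, hB3]
    simp only [smul_pow, smul_smul, two_mul]
    match_scalars <;> ring
  calc ‖exp x - (1 + c) * v + ((t : ℂ) ^ 3 / 12) • (B * B * B)‖
      = ‖T - (w + w)‖ := by rw [hmain]
    _ ≤ ‖T‖ + ‖w + w‖ := norm_sub_le _ _
    _ ≤ ‖T‖ + (‖w‖ + ‖w‖) := by gcongr; exact norm_add_le _ _
    _ ≤ Efac * (t ^ 4 * a ^ 4) + (t ^ 4 * a ^ 4 * (2 * b) / 16 + t ^ 4 * a ^ 4 * (2 * b) / 16) := by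
        gcongr
    _ ≤ (a ^ 4 * Efac + 4 * a ^ 4 * b + 1) * t ^ 4 := by nlinarith [pow_pos ht 4, mul_nonneg (mul_nonneg (pow_pos ht 4).le (pow_nonneg ha0 4)) hb0]

set_option maxHeartbeats 2000000 in
theorem crank_nicolson_one_step_error (n : ℕ) (hn : 1 ≤ n)
    (A : Matrix (Fin n) (Fin n) ℂ) (g : EuclideanSpace ℂ (Fin n)) :
    ∃ C > (0 : ℝ), ∃ t₀ > (0 : ℝ), ∀ t : ℝ, 0 < t → t ≤ t₀ →
      IsUnit (1 - ((t : ℂ) / 2) • A) ∧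
      |‖Matrix.toEuclideanLin (NormedSpace.exp ((t : ℂ) • A)) g -
          Matrix.toEuclideanLin ((1 + ((t : ℂ) / 2) • A) * (1 - ((t : ℂ) / 2) • A)⁻¹) g‖ -
        t ^ 3 / 12 * ‖Matrix.toEuclideanLin (A * A * A) g‖| ≤ C * t ^ 4 := by
  classical
  letI : MetricSpace (Matrix (Fin n) (Fin n) ℂ) := Matrix.instL2OpMetricSpace
  letI : NormedRing (Matrix (Fin n) (Fin n) ℂ) := Matrix.instL2OpNormedRing
  letI : NormedAlgebra ℂ (Matrix (Fin n) (Fin n) ℂ) := Matrix.instL2OpNormedAlgebra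
  haveI : CompleteSpace (Matrix (Fin n) (Fin n) ℂ) := FiniteDimensional.complete ℂ _
  set E := EuclideanSpace ℂ (Fin n) →L[ℂ] EuclideanSpace ℂ (Fin n) with hEdef
  set Φ := Matrix.toEuclideanCLM (𝕜 := ℂ) (n := Fin n) with hΦ
  set B : E := Φ A with hB
  have hfin : ∀ M : Matrix (Fin n) (Fin n) ℂ, Matrix.toEuclideanLin M g = Φ M g :=
    fun M => rfl
  have hcont : Continuous Φ := by
    let Φₗ : Matrix (Fin n) (Fin n) ℂ →ₗ[ℂ] E :=
      { toFun := Φ, map_add' := map_add Φ, map_smul' := map_smul Φ }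
    exact Φₗ.continuous_of_finiteDimensional
  obtain ⟨C₁, hC₁, t₀, ht₀, H⟩ := cn_aux (𝔸 := E) B
  refine ⟨C₁ * ‖g‖ + 1, by positivity, t₀, ht₀, ?_⟩
  intro t ht htle
  obtain ⟨hu', hbound⟩ := H t ht htle
  have hsmulmap : Φ (1 - ((t : ℂ) / 2) • A) = 1 - ((t : ℂ) / 2) • B := by
    rw [map_sub, map_one, map_smul]
  have hu : IsUnit (1 - ((t : ℂ) / 2) • A) := by
    have h1 := hu'.map Φ.symm
    rw [← hsmulmap, StarAlgEquiv.symm_apply_apply] at h1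
    exact h1
  refine ⟨hu, ?_⟩
  -- transfer the inverse
  have hΦinv : Φ ((1 - ((t : ℂ) / 2) • A)⁻¹) = Ring.inverse (1 - ((t : ℂ) / 2) • B) := by
    rw [Matrix.nonsing_inv_eq_ringInverse]
    have h2 : Φ (1 - ((t : ℂ) / 2) • A) * Φ (Ring.inverse (1 - ((t : ℂ) / 2) • A)) = 1 := by
      rw [← map_mul, Ring.mul_inverse_cancel _ hu, map_one]
    calc Φ (Ring.inverse (1 - ((t : ℂ) / 2) • A))
        = (Ring.inverse (1 - ((t : ℂ) / 2) • B) * Φ (1 - ((t : ℂ) / 2) • A)) *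
            Φ (Ring.inverse (1 - ((t : ℂ) / 2) • A)) := by
          rw [hsmulmap, Ring.inverse_mul_cancel _ hu', one_mul]
      _ = Ring.inverse (1 - ((t : ℂ) / 2) • B) := by
          rw [mul_assoc, h2, mul_one]
  have hΦexp : Φ (NormedSpace.exp ((t : ℂ) • A)) = NormedSpace.exp ((t : ℂ) • B) := by
    letI : NormedAlgebra ℚ (Matrix (Fin n) (Fin n) ℂ) := NormedAlgebra.restrictScalars ℚ ℂ _
    rw [map_exp Φ hcont, map_smul]
  have hΦCN : Φ ((1 + ((t : ℂ) / 2) • A) * (1 - ((t : ℂ) / 2) • A)⁻¹) =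
      (1 + ((t : ℂ) / 2) • B) * Ring.inverse (1 - ((t : ℂ) / 2) • B) := by
    rw [map_mul, hΦinv, map_add, map_one, map_smul]
  set Dm : E := NormedSpace.exp ((t : ℂ) • B)
      - (1 + ((t : ℂ) / 2) • B) * Ring.inverse (1 - ((t : ℂ) / 2) • B) with hDm
  have hvec : Matrix.toEuclideanLin (NormedSpace.exp ((t : ℂ) • A)) g -
      Matrix.toEuclideanLin ((1 + ((t : ℂ) / 2) • A) * (1 - ((t : ℂ) / 2) • A)⁻¹) g = Dm g := by
    rw [hfin, hfin, hΦexp, hΦCN, hDm, ContinuousLinearMap.sub_apply]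
  have hvec3 : Matrix.toEuclideanLin (A * A * A) g = (B * B * B) g := by
    rw [hfin, map_mul, map_mul]
  rw [hvec, hvec3]
  have htnorm : ‖((t : ℂ) ^ 3 / 12)‖ = t ^ 3 / 12 := by
    rw [norm_div, norm_pow, Complex.norm_real, Real.norm_eq_abs, abs_of_pos ht]
    norm_num
  have hzn : t ^ 3 / 12 * ‖(B * B * B) g‖ = ‖((t : ℂ) ^ 3 / 12) • ((B * B * B) g)‖ := by
    rw [norm_smul, htnorm]
  rw [hzn]
  have habs : |‖Dm g‖ - ‖((t : ℂ) ^ 3 / 12) • ((B * B * B) g)‖| ≤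
      ‖Dm g + ((t : ℂ) ^ 3 / 12) • ((B * B * B) g)‖ := by
    have h3 := abs_norm_sub_norm_le (Dm g) (-(((t : ℂ) ^ 3 / 12) • ((B * B * B) g)))
    rw [norm_neg, sub_neg_eq_add] at h3
    exact h3
  refine le_trans habs ?_
  have happ : Dm g + ((t : ℂ) ^ 3 / 12) • ((B * B * B) g) =
      (Dm + ((t : ℂ) ^ 3 / 12) • (B * B * B)) g := by
    rw [ContinuousLinearMap.add_apply, ContinuousLinearMap.smul_apply]
  rw [happ]
  calc ‖(Dm + ((t : ℂ) ^ 3 / 12) • (B * B * B)) g‖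
      ≤ ‖Dm + ((t : ℂ) ^ 3 / 12) • (B * B * B)‖ * ‖g‖ :=
        ContinuousLinearMap.le_opNorm _ _
    _ ≤ C₁ * t ^ 4 * ‖g‖ := by
        apply mul_le_mul_of_nonneg_right _ (norm_nonneg g)
        rw [hDm]
        exact hbound
    _ ≤ (C₁ * ‖g‖ + 1) * t ^ 4 := by nlinarith [pow_pos ht 4, norm_nonneg g]
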